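/- Let q be a prime power and let ℓ be an integer with 1 ≤ ℓ < q. Let n ≥ 2, 1 ≤ d ≤ n−1, and let g_1, …, g_{n−d} ∈ 𝔽_q[t_1, …, t_d] be polynomials of degree at most ℓ. Let ρ ∈ (𝔽_q \ {0})^{n−d}, let a ∈ 𝔽_q^n, and let C = { a + (t, ρ_1 g_1(t), …, ρ_{n−d} g_{n−d}(t)) : t ∈ 𝔽_q^d }. Let k, D, M be natural numbers such that ℓ(D − ω) < (M − ω)q for all integers 0 ≤ ω < k. Suppose f ∈ 𝔽_q[x_1, …, x_n] has degree at most D and vanishes on C with multiplicity M. Then for every β ∈ ℤ_{≥0}^n with |β| < k, the polynomial f_{β,ρ}(s) := f^{(β)}(a + (s, ρ_1 g_1(s), …, ρ_{n−d} g_{n−d}(s))) ∈ 𝔽_q[s_1, …, s_d] is the zero polynomial. -/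

import Mathlib

/-- The `β`-th Hasse derivative of a multivariate polynomial `f`: the coefficient of
`y^β` in `f(x + y)`, as a polynomial in `x`. -/
noncomputable def hasseDeriv {m : ℕ} {F : Type*} [CommRing F]
    (β : Fin m →₀ ℕ) (f : MvPolynomial (Fin m) F) : MvPolynomial (Fin m) F :=
  MvPolynomial.coeff β
    (MvPolynomial.eval₂ (MvPolynomial.C.comp MvPolynomial.C)
      (fun i => MvPolynomial.C (MvPolynomial.X i) + MvPolynomial.X i) f)

namespace HasseAux

open MvPolynomial

variable {F : Type*} [CommRing F] {m : ℕ}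

lemma hasseDeriv_add (β : Fin m →₀ ℕ) (f g : MvPolynomial (Fin m) F) :
    hasseDeriv β (f + g) = hasseDeriv β f + hasseDeriv β g := by
  simp [hasseDeriv, eval₂_add, coeff_add]

lemma hasseDeriv_zero (β : Fin m →₀ ℕ) :
    hasseDeriv β (0 : MvPolynomial (Fin m) F) = 0 := by
  simp [hasseDeriv]

lemma prod_monomial {σ : Type*} {R : Type*} [CommSemiring R] {ι : Type*} (s : Finset ι)
    (d : ι → (σ →₀ ℕ)) (c : ι → R) :
    ∏ i ∈ s, monomial (d i) (c i) = monomial (∑ i ∈ s, d i) (∏ i ∈ s, c i) := by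
  classical
  induction s using Finset.induction with
  | empty => simp
  | insert _ _ h ih =>
      rw [Finset.prod_insert h, ih, Finset.sum_insert h, Finset.prod_insert h, monomial_mul]

lemma prod_X_pow_univ {R : Type*} [CommSemiring R] (s : Fin m →₀ ℕ) :
    ∏ i, (X i : MvPolynomial (Fin m) R) ^ s i = monomial s 1 := by
  rw [← prod_X_pow_eq_monomial]
  refine (Finset.prod_subset (Finset.subset_univ _) ?_).symm
  intro i _ h
  simp [Finsupp.notMem_support_iff.mp h]

lemma hasseDeriv_monomial (β α : Fin m →₀ ℕ) (c : F) :
    hasseDeriv β (monomial α c) =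
      (∏ i, (α i).choose (β i)) • monomial (α - β) c := by
  classical
  rw [hasseDeriv, eval₂_monomial]
  rw [show (MvPolynomial.C.comp MvPolynomial.C) c
      = (C (C c) : MvPolynomial (Fin m) (MvPolynomial (Fin m) F)) from rfl]
  rw [Finsupp.prod_pow]
  have hpow : ∀ i : Fin m,
      (C (X i) + X i : MvPolynomial (Fin m) (MvPolynomial (Fin m) F)) ^ α i
        = ∑ k ∈ Finset.range (α i + 1),
            monomial (Finsupp.single i k)
              (((α i).choose k : MvPolynomial (Fin m) F) * (X i) ^ (α i - k)) := by
    intro i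
    rw [add_comm, add_pow]
    refine Finset.sum_congr rfl fun k _ => ?_
    rw [X_pow_eq_monomial, ← map_pow, Nat.cast_comm]
    rw [show (((α i).choose k : ℕ) : MvPolynomial (Fin m) (MvPolynomial (Fin m) F))
        = C (((α i).choose k : ℕ) : MvPolynomial (Fin m) F) from (map_natCast C _).symm]
    rw [mul_assoc, ← map_mul, C_apply, monomial_mul, add_zero, one_mul, mul_comm]
  simp only [hpow]
  rw [Finset.prod_univ_sum]
  simp only [prod_monomial]
  rw [coeff_C_mul, coeff_sum]
  have happ : ∀ (x : Fin m → ℕ) (j : Fin m), (∑ i, Finsupp.single i (x i)) j = x j := by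
    intro x j
    rw [Finsupp.finset_sum_apply]
    simp [Finsupp.single_apply]
  have hcond : ∀ x : Fin m → ℕ, ((∑ i, Finsupp.single i (x i)) = β ↔ x = fun i => β i) := by
    intro x
    constructor
    · intro hx
      funext j
      rw [← happ x j, hx]
    · rintro rfl
      ext j
      rw [happ]
  have hrw : ∀ x ∈ Fintype.piFinset (fun i => Finset.range (α i + 1)),
      coeff β ((monomial (∑ i, Finsupp.single i (x i)))
          (∏ i, (((α i).choose (x i) : MvPolynomial (Fin m) F)) * X i ^ (α i - x i)))
        = if x = (fun i => β i) then
            (∏ i, (((α i).choose (x i) : MvPolynomial (Fin m) F)) * X i ^ (α i - x i)) else 0 := by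
    intro x _
    rw [coeff_monomial]
    congr 1
    rw [eq_iff_iff]
    exact hcond x
  rw [Finset.sum_congr rfl hrw, Finset.sum_ite_eq' _ (fun i => β i)]
  by_cases hmem : (fun i => β i) ∈ Fintype.piFinset (fun i => Finset.range (α i + 1))
  · rw [if_pos hmem, Finset.prod_mul_distrib]
    have h1 : ∏ i, (((α i).choose (β i) : MvPolynomial (Fin m) F))
        = ((∏ i, (α i).choose (β i) : ℕ) : MvPolynomial (Fin m) F) := by push_cast; rfl
    have h2 : ∏ i, (X i : MvPolynomial (Fin m) F) ^ (α i - β i) = monomial (α - β) 1 := by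
      rw [← prod_X_pow_univ (α - β)]
      refine Finset.prod_congr rfl fun i _ => ?_
      rw [Finsupp.tsub_apply]
    rw [h1, h2, nsmul_eq_mul]
    ring_nf
    rw [mul_comm (C c) _, mul_assoc, C_mul_monomial, mul_one]
  · rw [if_neg hmem, mul_zero]
    have : ∃ i, α i < β i := by
      by_contra hno
      push_neg at hno
      exact hmem (by simpa [Fintype.mem_piFinset, Nat.lt_succ_iff] using hno)
    obtain ⟨i, hi⟩ := this
    rw [Finset.prod_eq_zero (Finset.mem_univ i) (Nat.choose_eq_zero_of_lt hi), zero_smul]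

lemma coeff_hasseDeriv (β δ : Fin m →₀ ℕ) (f : MvPolynomial (Fin m) F) :
    coeff δ (hasseDeriv β f) = (∏ i, ((δ + β) i).choose (β i)) • coeff (δ + β) f := by
  classical
  induction f using MvPolynomial.induction_on' with
  | add p q hp hq => rw [hasseDeriv_add, coeff_add, coeff_add, hp, hq, smul_add]
  | monomial α c =>
      rw [hasseDeriv_monomial, coeff_smul, coeff_monomial, coeff_monomial]
      by_cases hαδ : α = δ + β
      · subst hαδ
        have hsub : δ + β - β = δ := by
          ext i
          simp [Finsupp.tsub_apply]
        rw [if_pos hsub, if_pos rfl]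
      · rw [if_neg hαδ, smul_zero]
        by_cases h2 : α - β = δ
        · have : ∃ i, α i < β i := by
            by_contra hno
            push_neg at hno
            apply hαδ
            ext i
            have : α i - β i = δ i := by rw [← Finsupp.tsub_apply]; exact congrFun (congrArg Finsupp.toFun h2) i
            simp only [Finsupp.add_apply]
            have h3 := hno i
            omega
          obtain ⟨i, hi⟩ := this
          rw [if_pos h2, Finset.prod_eq_zero (Finset.mem_univ i)
            (Nat.choose_eq_zero_of_lt hi), zero_smul]
        · rw [if_neg h2, smul_zero]

lemma hasseDeriv_zero' (f : MvPolynomial (Fin m) F) :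
    hasseDeriv (0 : Fin m →₀ ℕ) f = f := by
  ext δ
  rw [coeff_hasseDeriv]
  simp

lemma hasseDeriv_hasseDeriv (β γ : Fin m →₀ ℕ) (f : MvPolynomial (Fin m) F) :
    hasseDeriv γ (hasseDeriv β f)
      = (∏ i, ((β + γ) i).choose (β i)) • hasseDeriv (β + γ) f := by
  ext δ
  rw [coeff_hasseDeriv, coeff_hasseDeriv, coeff_smul, coeff_hasseDeriv, smul_smul, smul_smul,
    ← Finset.prod_mul_distrib, ← Finset.prod_mul_distrib]
  have hidx : δ + γ + β = δ + (β + γ) := by rw [add_assoc, add_comm γ β]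
  rw [hidx]
  refine congrArg (· • coeff (δ + (β + γ)) f) ?_
  refine Finset.prod_congr rfl fun i _ => ?_
  simp only [Finsupp.add_apply]
  set x := δ i; set b := β i; set cc := γ i
  have h1 := Nat.choose_mul (n := x + b + cc) (k := b + cc) (s := b) (by omega)
  have h2 : x + b + cc - b = x + cc := by omega
  have e3 : b + cc - b = cc := by omega
  rw [h2, e3] at h1
  have e2 : x + (b + cc) = x + b + cc := (Nat.add_assoc x b cc).symm
  rw [e2, mul_comm, mul_comm ((b + cc).choose b) _]
  exact h1.symm

lemma sum_eq_fsum (s : Fin m →₀ ℕ) : (s.sum fun _ e => e) = ∑ i, s i :=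
  Finsupp.sum_fintype _ _ (fun _ => rfl)

lemma totalDegree_hasseDeriv_add_le (β : Fin m →₀ ℕ) (f : MvPolynomial (Fin m) F)
    (h : hasseDeriv β f ≠ 0) :
    (hasseDeriv β f).totalDegree + (∑ i, β i) ≤ f.totalDegree := by
  have hsup : (hasseDeriv β f).support.Nonempty := by
    rw [Finset.nonempty_iff_ne_empty, Ne, MvPolynomial.support_eq_empty]
    exact h
  obtain ⟨δ, hδmem, hδ⟩ := Finset.exists_mem_eq_sup _ hsup (fun s => s.sum fun _ e => e)
  have hc : coeff (δ + β) f ≠ 0 := by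
    intro h0
    apply MvPolynomial.mem_support_iff.mp hδmem
    rw [coeff_hasseDeriv, h0, smul_zero]
  have hle : ((δ + β).sum fun _ e => e) ≤ f.totalDegree :=
    MvPolynomial.le_totalDegree (MvPolynomial.mem_support_iff.mpr hc)
  rw [sum_eq_fsum] at hle
  have : (hasseDeriv β f).totalDegree = ∑ i, δ i := by
    rw [MvPolynomial.totalDegree, hδ, sum_eq_fsum]
  rw [this]
  calc (∑ i, δ i) + ∑ i, β i = ∑ i, (δ + β) i := by
        rw [← Finset.sum_add_distrib]
        exact Finset.sum_congr rfl fun i _ => rfl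
    _ ≤ f.totalDegree := hle

lemma taylor_eval₂ {A : Type*} [CommRing A] (ev : F →+* A) (u v : Fin m → A)
    (h : MvPolynomial (Fin m) F) :
    eval₂ ev (fun i => u i + v i) h =
      ∑ γ ∈ (eval₂ (C.comp C) (fun i => C (X i) + X i) h).support,
        eval₂ ev u (hasseDeriv γ h) * ∏ i, v i ^ γ i := by
  have key : eval₂Hom ev (fun i => u i + v i) =
      (eval₂Hom (eval₂Hom ev u) v).comp
        (eval₂Hom (C.comp C) (fun i => C (X i) + X i) :
          MvPolynomial (Fin m) F →+* MvPolynomial (Fin m) (MvPolynomial (Fin m) F)) := by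
    apply MvPolynomial.ringHom_ext
    · intro c
      simp
    · intro i
      simp
  have h1 : eval₂ ev (fun i => u i + v i) h
      = eval₂ (eval₂Hom ev u) v (eval₂ (C.comp C) (fun i => C (X i) + X i) h) := by
    have := RingHom.congr_fun key h
    simp only [RingHom.coe_comp, Function.comp_apply, coe_eval₂Hom] at this
    exact this
  rw [h1, eval₂_eq']
  refine Finset.sum_congr rfl fun γ _ => ?_
  rfl

lemma shift_eq_map (t : Fin m → F) (P : MvPolynomial (Fin m) F) :
    eval₂ C (fun i => C (t i) + X i) P
      = MvPolynomial.map (eval t) (eval₂ (C.comp C) (fun i => C (X i) + X i) P) := by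
  have key : (eval₂Hom C (fun i => C (t i) + X i) : MvPolynomial (Fin m) F →+* _)
      = (MvPolynomial.map (eval t)).comp
        (eval₂Hom (C.comp C) (fun i => C (X i) + X i) :
          MvPolynomial (Fin m) F →+* MvPolynomial (Fin m) (MvPolynomial (Fin m) F)) := by
    apply MvPolynomial.ringHom_ext
    · intro c
      simp
    · intro i
      simp
  have := RingHom.congr_fun key P
  simp only [RingHom.coe_comp, Function.comp_apply, coe_eval₂Hom] at this
  exact this

lemma coeff_shift (t : Fin m → F) (P : MvPolynomial (Fin m) F) (δ : Fin m →₀ ℕ) :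
    coeff δ (eval₂ C (fun i => C (t i) + X i) P) = eval t (hasseDeriv δ P) := by
  rw [shift_eq_map, coeff_map]
  rfl

lemma shift_shift_cancel (t u : Fin m → F) (hu : ∀ i, u i + t i = 0)
    (P : MvPolynomial (Fin m) F) :
    eval₂ C (fun i => C (t i) + X i) (eval₂ C (fun i => C (u i) + X i) P) = P := by
  have key : ((eval₂Hom C (fun i => C (t i) + X i)).comp
      (eval₂Hom C (fun i => C (u i) + X i)) : MvPolynomial (Fin m) F →+* _)
      = RingHom.id _ := by
    apply MvPolynomial.ringHom_ext
    · intro c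
      simp
    · intro i
      simp only [RingHom.coe_comp, Function.comp_apply, eval₂Hom_X', RingHom.id_apply]
      rw [map_add, eval₂Hom_C, eval₂Hom_X', ← add_assoc, ← C_add, hu, C_0, zero_add]
  have := RingHom.congr_fun key P
  simp only [RingHom.coe_comp, Function.comp_apply, coe_eval₂Hom, RingHom.id_apply] at this
  exact this

lemma eq_zero_of_shift_eq_zero (t : Fin m → F) (P : MvPolynomial (Fin m) F)
    (h : eval₂ C (fun i => C (t i) + X i) P = 0) : P = 0 := by
  have := shift_shift_cancel (fun i => -(t i)) t (fun i => by ring) P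
  rw [h, eval₂_zero] at this
  exact this.symm

/-- All coefficients of total degree `< k` vanish. -/
def LowZero (k : ℕ) (P : MvPolynomial (Fin m) F) : Prop :=
  ∀ δ : Fin m →₀ ℕ, (∑ i, δ i) < k → coeff δ P = 0

lemma lowZero_mul {k l : ℕ} {P Q : MvPolynomial (Fin m) F}
    (hP : LowZero k P) (hQ : LowZero l Q) : LowZero (k + l) (P * Q) := by
  intro δ hδ
  rw [coeff_mul]
  refine Finset.sum_eq_zero fun x hx => ?_
  rw [Finset.HasAntidiagonal.mem_antidiagonal] at hx
  have hsum : (∑ i, x.1 i) + (∑ i, x.2 i) = ∑ i, δ i := by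
    rw [← Finset.sum_add_distrib]
    exact Finset.sum_congr rfl fun i _ => by rw [← Finsupp.add_apply, hx]
  rcases lt_or_ge (∑ i, x.1 i) k with h | h
  · rw [hP x.1 h, zero_mul]
  · rw [hQ x.2 (by omega), mul_zero]

lemma lowZero_pow {P : MvPolynomial (Fin m) F} (hP : LowZero 1 P) (e : ℕ) :
    LowZero e (P ^ e) := by
  induction e with
  | zero => exact fun δ hδ => absurd hδ (by omega)
  | succ e ih => rw [pow_succ]; exact fun δ hδ => lowZero_mul ih hP δ hδ

lemma lowZero_mono {k l : ℕ} {P : MvPolynomial (Fin m) F} (h : LowZero k P) (hlk : l ≤ k) :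
    LowZero l P := fun δ hδ => h δ (by omega)

lemma lowZero_prod {ι : Type*} (s : Finset ι) (ψ : ι → MvPolynomial (Fin m) F) (e : ι → ℕ)
    (hψ : ∀ j, LowZero 1 (ψ j)) :
    LowZero (∑ j ∈ s, e j) (∏ j ∈ s, ψ j ^ e j) := by
  classical
  induction s using Finset.induction with
  | empty => exact fun δ hδ => absurd hδ (by simp)
  | insert _ _ hns ih =>
      rw [Finset.prod_insert hns, Finset.sum_insert hns, add_comm, mul_comm]
      exact lowZero_mul ih (lowZero_pow (hψ _) _)

lemma comp_mult {n : ℕ} (φ : Fin n → MvPolynomial (Fin m) F) (t : Fin m → F)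
    (h : MvPolynomial (Fin n) F) (M : ℕ)
    (hv : ∀ γ : Fin n →₀ ℕ, (∑ i, γ i) < M →
      eval (fun j => eval t (φ j)) (hasseDeriv γ h) = 0)
    (δ : Fin m →₀ ℕ) (hδ : (∑ i, δ i) < M) :
    eval t (hasseDeriv δ (eval₂ C φ h)) = 0 := by
  classical
  set pt : Fin n → F := fun j => eval t (φ j) with hpt
  set ψ : Fin n → MvPolynomial (Fin m) F :=
    fun j => eval₂ C (fun i => C (t i) + X i) (φ j) - C (pt j) with hψ
  have hψ0 : ∀ j, LowZero 1 (ψ j) := by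
    intro j δ' hδ'
    have hδ'' : δ' = 0 := by
      ext i
      have h1 : ∑ i, δ' i = 0 := by omega
      have := Finset.sum_eq_zero_iff.mp h1 i (Finset.mem_univ i)
      simpa using this
    subst hδ''
    rw [hψ]
    simp only [coeff_sub]
    rw [coeff_shift]
    rw [hasseDeriv_zero']
    simp [pt, coeff_C]
  have hcomp : eval₂ C (fun i => C (t i) + X i) (eval₂ C φ h)
      = eval₂ C (fun j => C (pt j) + ψ j) h := by
    have key : ((eval₂Hom C (fun i => C (t i) + X i)).comp (eval₂Hom C φ) :
        MvPolynomial (Fin n) F →+* MvPolynomial (Fin m) F)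
        = eval₂Hom C (fun j => eval₂ C (fun i => C (t i) + X i) (φ j)) := by
      apply MvPolynomial.ringHom_ext
      · intro c; simp
      · intro j
        simp only [RingHom.coe_comp, Function.comp_apply, eval₂Hom_X', coe_eval₂Hom]
        rw [eval₂_X]
    have h0 := RingHom.congr_fun key h
    simp only [RingHom.coe_comp, Function.comp_apply, coe_eval₂Hom] at h0
    rw [h0]
    refine congrFun (congrArg _ ?_) h
    funext j
    rw [hψ]
    ring
  have hCpt : ∀ (g : MvPolynomial (Fin n) F),
      eval₂ C (fun j => (C (pt j) : MvPolynomial (Fin m) F)) g = C (eval pt g) := by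
    intro g
    have key : (eval₂Hom C (fun j => (C (pt j) : MvPolynomial (Fin m) F)) :
        MvPolynomial (Fin n) F →+* MvPolynomial (Fin m) F)
        = (C : F →+* MvPolynomial (Fin m) F).comp (eval pt) := by
      apply MvPolynomial.ringHom_ext
      · intro c; simp
      · intro j; simp
    have h0 := RingHom.congr_fun key g
    simp only [RingHom.coe_comp, Function.comp_apply, coe_eval₂Hom] at h0
    exact h0
  rw [← coeff_shift, hcomp]
  have htaylor := taylor_eval₂ (C : F →+* MvPolynomial (Fin m) F)
    (fun j => C (pt j)) ψ h
  rw [htaylor, coeff_sum]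
  refine Finset.sum_eq_zero fun γ _ => ?_
  rw [hCpt, coeff_C_mul]
  rcases lt_or_ge (∑ i, γ i) M with hlt | hge
  · rw [hv γ hlt, zero_mul]
  · have hz : coeff δ (∏ i, ψ i ^ γ i) = 0 := by
      have := lowZero_prod Finset.univ ψ (fun j => γ j) hψ0
      exact this δ (lt_of_lt_of_le hδ hge)
    rw [hz, mul_zero]

lemma cons_add (x y : ℕ) (u v : Fin m →₀ ℕ) :
    Finsupp.cons x u + Finsupp.cons y v = Finsupp.cons (x + y) (u + v) := by
  ext i
  refine Fin.cases ?_ ?_ i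
  · simp
  · intro j
    simp

lemma sum_cons (x : ℕ) (u : Fin m →₀ ℕ) :
    (∑ i, (Finsupp.cons x u) i) = x + ∑ i, u i := by
  rw [Fin.sum_univ_succ]
  simp

lemma fse_hasseDeriv_cons_zero (γ : Fin m →₀ ℕ) (P : MvPolynomial (Fin (m + 1)) F) (j : ℕ) :
    (MvPolynomial.finSuccEquiv F m (hasseDeriv (Finsupp.cons 0 γ) P)).coeff j
      = hasseDeriv γ ((MvPolynomial.finSuccEquiv F m P).coeff j) := by
  ext δ
  rw [finSuccEquiv_coeff_coeff, coeff_hasseDeriv, coeff_hasseDeriv, finSuccEquiv_coeff_coeff]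
  have hidx : Finsupp.cons j δ + Finsupp.cons 0 γ = Finsupp.cons j (δ + γ) := by
    rw [cons_add, add_zero]
  rw [hidx]
  refine congrArg (fun z => z • coeff (Finsupp.cons j (δ + γ)) P) ?_
  rw [Fin.prod_univ_succ]
  simp [Finsupp.cons_zero, Finsupp.cons_succ]

lemma fse_hasseDeriv_single (j0 : ℕ) (P : MvPolynomial (Fin (m + 1)) F) :
    MvPolynomial.finSuccEquiv F m (hasseDeriv (Finsupp.cons j0 (0 : Fin m →₀ ℕ)) P)
      = Polynomial.hasseDeriv j0 (MvPolynomial.finSuccEquiv F m P) := by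
  apply Polynomial.ext
  intro j
  ext δ
  rw [finSuccEquiv_coeff_coeff, coeff_hasseDeriv, Polynomial.hasseDeriv_coeff]
  have hidx : Finsupp.cons j δ + Finsupp.cons j0 (0 : Fin m →₀ ℕ)
      = Finsupp.cons (j + j0) δ := by
    rw [cons_add, add_zero]
  rw [hidx]
  have hsm : ((j + j0).choose j0 : MvPolynomial (Fin m) F)
        * (MvPolynomial.finSuccEquiv F m P).coeff (j + j0)
      = ((j + j0).choose j0) • (MvPolynomial.finSuccEquiv F m P).coeff (j + j0) := by
    rw [nsmul_eq_mul]
  rw [hsm, coeff_smul, finSuccEquiv_coeff_coeff]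
  refine congrArg (fun z => z • coeff (Finsupp.cons (j + j0) δ) P) ?_
  rw [Fin.prod_univ_succ]
  simp [Finsupp.cons_zero, Finsupp.cons_succ]

lemma map_hasseDeriv {R S : Type*} [CommSemiring R] [CommSemiring S] (f : R →+* S) (k : ℕ)
    (p : Polynomial R) :
    (Polynomial.hasseDeriv k p).map f = Polynomial.hasseDeriv k (p.map f) := by
  apply Polynomial.ext
  intro n
  rw [Polynomial.coeff_map, Polynomial.hasseDeriv_coeff, Polynomial.hasseDeriv_coeff,
    Polynomial.coeff_map]
  rw [show ((n + k).choose k : R) * p.coeff (n + k) = ((n + k).choose k) • p.coeff (n + k) from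
    (nsmul_eq_mul _ _).symm]
  rw [map_nsmul, nsmul_eq_mul]

lemma line_dvd {mm : ℕ} (Q : MvPolynomial (Fin (mm + 1)) F) (a : Fin mm → F) (b : F) (k : ℕ)
    (h : ∀ j : ℕ, j < k →
      eval (Fin.cons b a) (hasseDeriv (Finsupp.cons j (0 : Fin mm →₀ ℕ)) Q) = 0) :
    (Polynomial.X - Polynomial.C b) ^ k ∣
      (MvPolynomial.finSuccEquiv F mm Q).map (eval a) := by
  set R : Polynomial F := (MvPolynomial.finSuccEquiv F mm Q).map (eval a) with hR
  have hdvd : (Polynomial.X : Polynomial F) ^ k ∣ Polynomial.taylor b R := by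
    rw [Polynomial.X_pow_dvd_iff]
    intro j hj
    rw [Polynomial.taylor_coeff]
    have h1 : Polynomial.hasseDeriv j R
        = (Polynomial.hasseDeriv j (MvPolynomial.finSuccEquiv F mm Q)).map (eval a) := by
      rw [map_hasseDeriv]
    rw [h1, ← fse_hasseDeriv_single, ← MvPolynomial.eval_eq_eval_mv_eval']
    exact h j hj
  obtain ⟨W, hW⟩ := hdvd
  have hRcomp : R = (Polynomial.taylor b R).comp (Polynomial.X - Polynomial.C b) := by
    rw [Polynomial.taylor_apply, Polynomial.comp_assoc]
    have : (Polynomial.X + Polynomial.C b).comp (Polynomial.X - Polynomial.C b)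
        = (Polynomial.X : Polynomial F) := by
      rw [Polynomial.add_comp, Polynomial.X_comp, Polynomial.C_comp, sub_add_cancel]
    rw [this, Polynomial.comp_X]
  rw [hRcomp, hW, Polynomial.mul_comp, Polynomial.pow_comp, Polynomial.X_comp]
  exact Dvd.intro _ rfl

lemma univariate_count {F : Type*} [Field F] [Fintype F] (R : Polynomial F) (hR : R ≠ 0)
    (k : ℕ) (h : ∀ b : F, (Polynomial.X - Polynomial.C b) ^ k ∣ R) :
    k * Fintype.card F ≤ R.natDegree := by
  classical
  have h1 : ∀ b : F, k ≤ R.rootMultiplicity b := fun b =>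
    (Polynomial.le_rootMultiplicity_iff hR).mpr (h b)
  calc k * Fintype.card F = ∑ _b : F, k := by rw [Finset.sum_const, Finset.card_univ, mul_comm,
        smul_eq_mul]
    _ ≤ ∑ b : F, R.roots.count b := Finset.sum_le_sum fun b _ => by
        rw [Polynomial.count_roots]; exact h1 b
    _ = Multiset.card R.roots := Multiset.sum_count_eq_card fun a _ => Finset.mem_univ a
    _ ≤ R.natDegree := R.card_roots'

lemma weak_SZ {F : Type*} [Field F] [Fintype F] :
    ∀ (d : ℕ) (mm : ℕ) (P : MvPolynomial (Fin d) F),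
    (∀ x : Fin d → F, ∀ γ : Fin d →₀ ℕ, (∑ i, γ i) < mm → eval x (hasseDeriv γ P) = 0) →
    P.totalDegree < mm * Fintype.card F → P = 0 := by
  intro d
  induction d with
  | zero =>
      intro mm P hv hdeg
      have hm : 0 < mm := by
        rcases Nat.eq_zero_or_pos mm with h0 | h0
        · rw [h0, zero_mul] at hdeg
          omega
        · exact h0
      have h0 := hv (fun i => i.elim0) 0 (by simpa using hm)
      rw [hasseDeriv_zero'] at h0
      rw [MvPolynomial.eq_C_of_isEmpty P] at h0 ⊢
      rw [eval_C] at h0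
      rw [h0, map_zero]
  | succ d ih =>
      intro mm P hv hdeg
      by_contra hP
      set P' := MvPolynomial.finSuccEquiv F d P with hP'def
      have hP' : P' ≠ 0 := fun h0 => hP (by
        have := congrArg (MvPolynomial.finSuccEquiv F d).symm h0
        simpa [hP'def] using this)
      set t := P'.natDegree with ht
      set Pt := P'.coeff t with hPt
      have hPtne : Pt ≠ 0 := by
        rw [hPt, ht]
        exact Polynomial.leadingCoeff_ne_zero.mpr hP'
      have hq0 : 0 < Fintype.card F := Fintype.card_pos
      have hPtv : ∀ (x : Fin d → F) (γ : Fin d →₀ ℕ),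
          (∑ i, γ i) < mm - t / Fintype.card F → eval x (hasseDeriv γ Pt) = 0 := by
        by_contra hcon
        push_neg at hcon
        obtain ⟨a, γ, hlt, hne⟩ := hcon
        set μ := ∑ i, γ i with hμ
        set k := mm - μ with hk
        have hμmm : μ < mm := lt_of_lt_of_le hlt (Nat.sub_le mm _)
        set Q := hasseDeriv (Finsupp.cons 0 γ) P with hQ
        have h1 : ∀ (b : F) (j : ℕ), j < k →
            eval (Fin.cons b a) (hasseDeriv (Finsupp.cons j (0 : Fin d →₀ ℕ)) Q) = 0 := by
          intro b j hj
          rw [hQ, hasseDeriv_hasseDeriv, map_nsmul]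
          have hidx : Finsupp.cons 0 γ + Finsupp.cons j (0 : Fin d →₀ ℕ)
              = Finsupp.cons j γ := by
            rw [cons_add, zero_add, add_zero]
          rw [hidx, hv (Fin.cons b a) (Finsupp.cons j γ) ?_, smul_zero]
          rw [sum_cons]
          omega
        set R : Polynomial F := (MvPolynomial.finSuccEquiv F d Q).map (eval a) with hRdef
        have h2 : ∀ b : F, (Polynomial.X - Polynomial.C b) ^ k ∣ R := fun b =>
          line_dvd Q a b k (h1 b)
        have h3 : R ≠ 0 := by
          intro h0
          apply hne
          have hco : R.coeff t = 0 := by rw [h0, Polynomial.coeff_zero]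
          rw [hRdef, Polynomial.coeff_map, hQ, fse_hasseDeriv_cons_zero] at hco
          exact hco
        have h4 : R.natDegree ≤ t := by
          refine Polynomial.natDegree_le_iff_coeff_eq_zero.mpr fun j hj => ?_
          rw [hRdef, Polynomial.coeff_map, hQ, fse_hasseDeriv_cons_zero]
          rw [Polynomial.coeff_eq_zero_of_natDegree_lt hj, hasseDeriv_zero, map_zero]
        have h5 : k * Fintype.card F ≤ t := le_trans (univariate_count R h3 k h2) h4
        have h6 : k ≤ t / Fintype.card F := (Nat.le_div_iff_mul_le hq0).mpr h5
        omega
      have hPtdeg : Pt.totalDegree + t ≤ P.totalDegree :=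
        MvPolynomial.totalDegree_coeff_finSuccEquiv_add_le P t hPtne
      have h7 : (t / Fintype.card F) * Fintype.card F ≤ t := Nat.div_mul_le_self t _
      have h8 : Pt.totalDegree < (mm - t / Fintype.card F) * Fintype.card F := by
        rw [Nat.sub_mul]
        generalize hA : mm * Fintype.card F = A at hdeg
        generalize hB : (t / Fintype.card F) * Fintype.card F = B at h7
        omega
      exact hPtne (ih (mm - t / Fintype.card F) Pt hPtv h8)

lemma totalDegree_eval₂_le {n : ℕ} (φ : Fin n → MvPolynomial (Fin m) F) (L : ℕ)
    (hφ : ∀ j, (φ j).totalDegree ≤ L) (h : MvPolynomial (Fin n) F) :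
    (eval₂ C φ h).totalDegree ≤ h.totalDegree * L := by
  rw [eval₂_eq']
  refine le_trans (MvPolynomial.totalDegree_finset_sum _ _) (Finset.sup_le fun α hα => ?_)
  refine le_trans (MvPolynomial.totalDegree_mul _ _) ?_
  rw [MvPolynomial.totalDegree_C, zero_add]
  refine le_trans (MvPolynomial.totalDegree_finset_prod _ _) ?_
  calc ∑ j, ((φ j) ^ (α j)).totalDegree
      ≤ ∑ j, (α j) * L := Finset.sum_le_sum fun j _ =>
        le_trans (MvPolynomial.totalDegree_pow _ _) (Nat.mul_le_mul_left _ (hφ j))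
    _ = (∑ j, α j) * L := by rw [Finset.sum_mul]
    _ ≤ h.totalDegree * L := by
        refine Nat.mul_le_mul_right _ ?_
        have := MvPolynomial.le_totalDegree hα
        rw [sum_eq_fsum] at this
        exact this

end HasseAux

/-- The multiplicity of `f` at the point `a`: the supremum of all `M ∈ ℤ_{≥0}` such that
`f^{(β)}(a) = 0` for all `β` with `|β| < M`. -/
noncomputable def polyMult {m : ℕ} {F : Type*} [CommRing F]
    (f : MvPolynomial (Fin m) F) (a : Fin m → F) : ℕ∞ :=
  ⨆ M ∈ {M : ℕ | ∀ β : Fin m →₀ ℕ, (∑ i, β i) < M →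
    MvPolynomial.eval a (hasseDeriv β f) = 0}, (M : ℕ∞)

/-- The point `a + (t, ρ_1 g_1(t), …, ρ_{n-d} g_{n-d}(t)) ∈ F^n`. -/
noncomputable def curvePt {F : Type*} [Field F] {n d : ℕ} (a : Fin n → F) (ρ : Fin (n - d) → F)
    (g : Fin (n - d) → MvPolynomial (Fin d) F) (t : Fin d → F) : Fin n → F :=
  fun j => a j + if hj : (j : ℕ) < d then t ⟨j, hj⟩
    else ρ ⟨(j : ℕ) - d, by have := j.isLt; omega⟩ *
      MvPolynomial.eval t (g ⟨(j : ℕ) - d, by have := j.isLt; omega⟩)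

/-- The tuple of polynomials `s ↦ a + (s, ρ_1 g_1(s), …, ρ_{n-d} g_{n-d}(s))`,
coordinatewise as elements of `F[s_1,…,s_d]`. -/
noncomputable def curvePoly {F : Type*} [Field F] {n d : ℕ} (a : Fin n → F)
    (ρ : Fin (n - d) → F) (g : Fin (n - d) → MvPolynomial (Fin d) F) :
    Fin n → MvPolynomial (Fin d) F :=
  fun j => MvPolynomial.C (a j) + if hj : (j : ℕ) < d then MvPolynomial.X ⟨j, hj⟩
    else MvPolynomial.C (ρ ⟨(j : ℕ) - d, by have := j.isLt; omega⟩) *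
      g ⟨(j : ℕ) - d, by have := j.isLt; omega⟩

namespace HasseAux

open MvPolynomial

lemma polyMult_extract {m : ℕ} {F : Type*} [CommRing F] (f : MvPolynomial (Fin m) F)
    (p : Fin m → F) (M : ℕ) (h : (M : ℕ∞) ≤ polyMult f p)
    (δ : Fin m →₀ ℕ) (hδ : (∑ i, δ i) < M) :
    MvPolynomial.eval p (hasseDeriv δ f) = 0 := by
  have h1 : ((∑ i, δ i : ℕ) : ℕ∞) < polyMult f p :=
    lt_of_lt_of_le (by exact_mod_cast hδ) h
  rw [polyMult] at h1
  obtain ⟨M', hM'⟩ := lt_iSup_iff.mp h1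
  by_cases hmem : M' ∈ {M : ℕ | ∀ β : Fin m →₀ ℕ, (∑ i, β i) < M →
      MvPolynomial.eval p (hasseDeriv β f) = 0}
  · apply hmem δ
    rw [iSup_pos hmem] at hM'
    exact_mod_cast hM'
  · rw [iSup_neg hmem] at hM'
    exact absurd hM' (by simp)

lemma eval_curvePoly {F : Type*} [Field F] {n d : ℕ} (a : Fin n → F) (ρ : Fin (n - d) → F)
    (g : Fin (n - d) → MvPolynomial (Fin d) F) (x : Fin d → F) (j : Fin n) :
    eval x (curvePoly a ρ g j) = curvePt a ρ g x j := by
  unfold curvePoly curvePt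
  by_cases hj : (j : ℕ) < d
  · simp [hj]
  · simp [hj]

lemma curvePoly_totalDegree_le {F : Type*} [Field F] {n d ℓ : ℕ} (hl1 : 1 ≤ ℓ)
    (g : Fin (n - d) → MvPolynomial (Fin d) F) (hg : ∀ i, (g i).totalDegree ≤ ℓ)
    (a : Fin n → F) (ρ : Fin (n - d) → F) (j : Fin n) :
    (curvePoly a ρ g j).totalDegree ≤ ℓ := by
  unfold curvePoly
  refine le_trans (MvPolynomial.totalDegree_add _ _) (max_le (by simp) ?_)
  by_cases hj : (j : ℕ) < d
  · rw [dif_pos hj, MvPolynomial.totalDegree_X]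
    exact hl1
  · rw [dif_neg hj]
    refine le_trans (MvPolynomial.totalDegree_mul _ _) ?_
    rw [MvPolynomial.totalDegree_C, zero_add]
    exact hg _

end HasseAux

open HasseAux MvPolynomial

/-- If `1 ≤ ℓ < q`, the `g_i` have degree at most `ℓ`, `ℓ(D - ω) < (M - ω)q` for all
`0 ≤ ω < k`, and `f` has degree at most `D` and vanishes with multiplicity `M` on the
curve `C = { a + (t, ρ_1 g_1(t), …, ρ_{n-d} g_{n-d}(t)) : t ∈ 𝔽_q^d }`, then for every
`β` with `|β| < k` the polynomial `f_{β,ρ}(s) = f^{(β)}(a + (s, ρ_1 g_1(s), …))` is the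
zero polynomial. -/
theorem hasseDeriv_comp_curve_eq_zero {F : Type*} [Field F] [Fintype F]
    (q n d ℓ k D M : ℕ) (hq : IsPrimePow q) (hcard : Fintype.card F = q)
    (hl1 : 1 ≤ ℓ) (hlq : ℓ < q) (hn : 2 ≤ n) (hd1 : 1 ≤ d) (hdn : d ≤ n - 1)
    (g : Fin (n - d) → MvPolynomial (Fin d) F) (hg : ∀ i, (g i).totalDegree ≤ ℓ)
    (ρ : Fin (n - d) → F) (hρ : ∀ i, ρ i ≠ 0) (a : Fin n → F)
    (hkDM : ∀ ω : ℕ, ω < k → (ℓ : ℤ) * ((D : ℤ) - (ω : ℤ)) < ((M : ℤ) - (ω : ℤ)) * q)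
    (f : MvPolynomial (Fin n) F) (hf : f.totalDegree ≤ D)
    (hvanish : ∀ t : Fin d → F, (M : ℕ∞) ≤ polyMult f (curvePt a ρ g t))
    (β : Fin n →₀ ℕ) (hβ : (∑ i, β i) < k) :
    MvPolynomial.aeval (curvePoly a ρ g) (hasseDeriv β f) = 0 := by
  classical
  subst hcard
  by_cases hzero : hasseDeriv β f = 0
  · rw [hzero, map_zero]
  set ω := ∑ i, β i with hω
  have hdeg : (hasseDeriv β f).totalDegree + ω ≤ D :=
    le_trans (totalDegree_hasseDeriv_add_le β f hzero) hf
  have hωD : ω ≤ D := le_trans (Nat.le_add_left _ _) hdeg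
  have hcard0 : (0 : ℤ) < (Fintype.card F : ℤ) := by exact_mod_cast Fintype.card_pos
  have hZ := hkDM ω hβ
  have hωM : ω < M := by
    have h1 : (0 : ℤ) ≤ (ℓ : ℤ) * ((D : ℤ) - ω) := by
      refine mul_nonneg (by positivity) ?_
      have : (ω : ℤ) ≤ (D : ℤ) := by exact_mod_cast hωD
      omega
    nlinarith [hZ, h1, hcard0]
  have hev : ∀ t : Fin d → F, ∀ δ : Fin n →₀ ℕ, (∑ i, δ i) < M →
      eval (curvePt a ρ g t) (hasseDeriv δ f) = 0 :=
    fun t => polyMult_extract f _ M (hvanish t)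
  rw [MvPolynomial.aeval_def, MvPolynomial.algebraMap_eq]
  refine weak_SZ d (M - ω) _ ?_ ?_
  · intro x γ hγ
    refine comp_mult (curvePoly a ρ g) x (hasseDeriv β f) (M - ω) ?_ γ hγ
    intro γ' hγ'
    have heq : (fun j => eval x (curvePoly a ρ g j)) = curvePt a ρ g x := by
      funext j
      exact eval_curvePoly a ρ g x j
    rw [heq, hasseDeriv_hasseDeriv, map_nsmul]
    have hsum : (∑ i, (β + γ') i) = ω + ∑ i, γ' i := by
      rw [hω, ← Finset.sum_add_distrib]
      exact Finset.sum_congr rfl fun i _ => rfl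
    rw [hev x (β + γ') (by omega), smul_zero]
  · have hb1 : (eval₂ C (curvePoly a ρ g) (hasseDeriv β f)).totalDegree
        ≤ (hasseDeriv β f).totalDegree * ℓ :=
      totalDegree_eval₂_le _ ℓ (fun j => curvePoly_totalDegree_le hl1 g hg a ρ j) _
    have hb2 : (hasseDeriv β f).totalDegree * ℓ ≤ (D - ω) * ℓ :=
      Nat.mul_le_mul_right _ (by omega)
    have hb3 : (D - ω) * ℓ < (M - ω) * Fintype.card F := by
      zify [hωD, hωM.le]
      rw [mul_comm]
      exact hZ
    omega
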